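/- Suppose the equation x(k+1) = A(k)x(k) has an exponential dichotomy on an infinite interval J with projection P(k) and constants K, α, and suppose J contains (−∞,m]. Then the nullspace N(P(m)) equals the set of ξ ∈ ℝⁿ for which there exists a solution y(k) of the equation, defined and bounded for k ≤ m (i.e. y(k+1) = A(k)y(k) for k ≤ m−1 and sup_{k ≤ m} ‖y(k)‖ < ∞), with y(m) = ξ. Moreover, for each ξ ∈ N(P(m)) such a bounded solution is unique. -/

import Mathlib

noncomputable section

open scoped BigOperators

/-- ℝⁿ as a Euclidean space. -/
abbrev Euc (n : ℕ) := EuclideanSpace ℝ (Fin n)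

/-- The transition matrix `Φ(k,m) = A(k-1) ⋯ A(m)`, with `Φ(m,m) = 1`
(and `Φ(k,m) = 1` when `k ≤ m`). -/
def Phi {n : ℕ} (A : ℤ → (Euc n →L[ℝ] Euc n)) (k m : ℤ) : Euc n →L[ℝ] Euc n :=
  (((List.range (k - m).toNat).map fun i => A (m + i)).reverse).prod

/-- `J` is an interval of integers. -/
def IsIntInterval (J : Set ℤ) : Prop :=
  ∀ ⦃a b c : ℤ⦄, a ∈ J → b ∈ J → a ≤ c → c ≤ b → c ∈ J

/-- The equation `x(k+1) = A(k) x(k)` has an exponential dichotomy on `J` with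
projection family `P`, constant `K` and exponent `α`. -/
structure ExpDichotomyOn {n : ℕ} (A : ℤ → (Euc n →L[ℝ] Euc n)) (J : Set ℤ)
    (P : ℤ → (Euc n →L[ℝ] Euc n)) (K α : ℝ) : Prop where
  one_le_K : 1 ≤ K
  alpha_pos : 0 < α
  proj : ∀ k ∈ J, P k ∘L P k = P k
  rank_const : ∀ k ∈ J, ∀ m ∈ J,
    Module.finrank ℝ (LinearMap.range (P k : Euc n →ₗ[ℝ] Euc n)) = Module.finrank ℝ (LinearMap.range (P m : Euc n →ₗ[ℝ] Euc n))
  invariance : ∀ m ∈ J, ∀ k ∈ J, m ≤ k → Phi A k m ∘L P m = P k ∘L Phi A k m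
  forward : ∀ m ∈ J, ∀ k ∈ J, m ≤ k →
    ‖Phi A k m ∘L P m‖ ≤ K * Real.exp (-α * ((k : ℝ) - (m : ℝ)))
  bijOn : ∀ k : ℤ, k ∈ J → k + 1 ∈ J →
    Set.BijOn (A k) (LinearMap.ker (P k : Euc n →ₗ[ℝ] Euc n) : Set (Euc n)) (LinearMap.ker (P (k + 1) : Euc n →ₗ[ℝ] Euc n) : Set (Euc n))
  backward : ∃ Ψ : ℤ → ℤ → (Euc n →L[ℝ] Euc n), ∀ m ∈ J, ∀ k ∈ J, m ≤ k →
    (∀ x ∈ LinearMap.ker (P m : Euc n →ₗ[ℝ] Euc n), Ψ m k (Phi A k m x) = x) ∧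
    (∀ x ∈ LinearMap.ker (P k : Euc n →ₗ[ℝ] Euc n), Ψ m k x ∈ LinearMap.ker (P m : Euc n →ₗ[ℝ] Euc n) ∧ Phi A k m (Ψ m k x) = x) ∧
    ‖Ψ m k ∘L (1 - P k)‖ ≤ K * Real.exp (-α * ((k : ℝ) - (m : ℝ)))

private lemma flatMap_single' {α β : Type*} (g : α → β) (l : List α) :
    (l.flatMap fun a => [g a]) = l.map g := by
  induction l with
  | nil => rfl
  | cons a l ih => simp [List.flatMap_cons, ih]

lemma Phi_eq {n : ℕ} (A : ℤ → (Euc n →L[ℝ] Euc n)) (k m : ℤ) :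
    Phi A k m = (((List.range (k - m).toNat).map fun i : ℕ => A (m + (i:ℤ))).reverse).prod := by
  show (List.map (fun i : ℤ => A (m + i))
      (List.flatMap (fun a : ℕ => [(a : ℤ)]) (List.range (k - m).toNat))).reverse.prod = _
  rw [flatMap_single', List.map_map]
  rfl

lemma Phi_self {n : ℕ} (A : ℤ → (Euc n →L[ℝ] Euc n)) (m : ℤ) : Phi A m m = 1 := by
  rw [Phi_eq]; simp

lemma Phi_succ_top {n : ℕ} (A : ℤ → (Euc n →L[ℝ] Euc n)) {k m : ℤ} (h : m ≤ k) :
    Phi A (k + 1) m = A k ∘L Phi A k m := by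
  rw [Phi_eq, Phi_eq]
  have h1 : (k + 1 - m).toNat = (k - m).toNat + 1 := by omega
  have h2 : m + ((k - m).toNat : ℤ) = k := by omega
  rw [h1, List.range_succ, List.map_append, List.reverse_append]
  simp only [List.map_cons, List.map_nil, List.reverse_cons, List.reverse_nil,
    List.nil_append, List.singleton_append, List.prod_cons, h2]
  rfl

lemma Phi_succ_bot {n : ℕ} (A : ℤ → (Euc n →L[ℝ] Euc n)) {k j : ℤ} (h : j < k) :
    Phi A k j = Phi A k (j + 1) ∘L A j := by
  rw [Phi_eq, Phi_eq]
  have h1 : (k - j).toNat = (k - (j + 1)).toNat + 1 := by omega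
  rw [h1, List.range_succ_eq_map, List.map_cons, List.map_map, List.reverse_cons,
    List.prod_append]
  have h3 : ((fun i : ℕ => A (j + (i:ℤ))) ∘ Nat.succ) = fun i : ℕ => A (j + 1 + (i:ℤ)) := by
    funext i; simp only [Function.comp]; congr 1; push_cast; ring
  rw [h3]
  simp only [add_zero, Nat.cast_zero, List.prod_cons, List.prod_nil, mul_one]
  rfl

/-- A solution satisfies `y k = Φ(k,j) (y j)` for `j ≤ k ≤ m`. -/
lemma sol_transition {n : ℕ} (A : ℤ → (Euc n →L[ℝ] Euc n)) (m : ℤ) (y : ℤ → Euc n)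
    (hy : ∀ k : ℤ, k < m → y (k + 1) = A k (y k)) :
    ∀ j k : ℤ, j ≤ k → k ≤ m → y k = Phi A k j (y j) := by
  intro j k hjk
  refine Int.le_induction (motive := fun k _ => k ≤ m → y k = Phi A k j (y j)) ?_ ?_ k hjk
  · intro _; rw [Phi_self]; rfl
  · intro k hjk ih hk1
    have hkm : k < m := by omega
    rw [hy k hkm, ih (by omega), Phi_succ_top A hjk]
    rfl

/-- if the equation has an exponential dichotomy on an infinite interval `J`
containing `(-∞, m]`, then `N(P(m))` is exactly the set of `ξ` for which there is a
solution of the equation, defined and bounded for `k ≤ m`, taking the value `ξ` at `m`;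
moreover such a bounded solution is unique. -/
theorem statement3 {n : ℕ} (A P : ℤ → (Euc n →L[ℝ] Euc n)) (J : Set ℤ) (K α : ℝ)
    (hJ : IsIntInterval J)
    (hED : ExpDichotomyOn A J P K α) (m : ℤ) (hm : ∀ k : ℤ, k ≤ m → k ∈ J) :
    ((LinearMap.ker (P m : Euc n →ₗ[ℝ] Euc n) : Set (Euc n))
        = {ξ : Euc n | ∃ y : ℤ → Euc n, (∀ k : ℤ, k < m → y (k + 1) = A k (y k)) ∧
            (∃ C : ℝ, ∀ k : ℤ, k ≤ m → ‖y k‖ ≤ C) ∧ y m = ξ}) ∧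
    (∀ ξ ∈ LinearMap.ker (P m : Euc n →ₗ[ℝ] Euc n), ∀ y z : ℤ → Euc n,
      (∀ k : ℤ, k < m → y (k + 1) = A k (y k)) → (∃ C : ℝ, ∀ k : ℤ, k ≤ m → ‖y k‖ ≤ C) →
        y m = ξ →
      (∀ k : ℤ, k < m → z (k + 1) = A k (z k)) → (∃ C : ℝ, ∀ k : ℤ, k ≤ m → ‖z k‖ ≤ C) →
        z m = ξ →
      ∀ k : ℤ, k ≤ m → y k = z k) := by
  obtain ⟨Ψ, hΨ⟩ := hED.backward
  have hmJ : m ∈ J := hm m le_rfl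
  -- Key: a bounded solution lies in the kernels of the projections.
  have key : ∀ (y : ℤ → Euc n), (∀ k : ℤ, k < m → y (k + 1) = A k (y k)) →
      ∀ C : ℝ, (∀ k : ℤ, k ≤ m → ‖y k‖ ≤ C) → ∀ k : ℤ, k ≤ m → P k (y k) = 0 := by
    intro y hy C hC k hk
    have hC0 : 0 ≤ C := le_trans (norm_nonneg _) (hC m le_rfl)
    have hbound : ∀ N : ℕ, ‖P k (y k)‖ ≤ K * Real.exp (-α) ^ N * C := by
      intro N
      set j : ℤ := k - N with hj
      have hjk : j ≤ k := by omega
      have hjm : j ≤ m := by omega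
      have hyk : y k = Phi A k j (y j) := sol_transition A m y hy j k hjk hk
      have hPyk : P k (y k) = (Phi A k j ∘L P j) (y j) := by
        rw [hED.invariance j (hm j hjm) k (hm k hk) hjk, hyk]
        rfl
      rw [hPyk]
      calc ‖(Phi A k j ∘L P j) (y j)‖ ≤ ‖Phi A k j ∘L P j‖ * ‖y j‖ :=
            ContinuousLinearMap.le_opNorm _ _
        _ ≤ (K * Real.exp (-α * ((k : ℝ) - (j : ℝ)))) * C := by
            apply mul_le_mul (hED.forward j (hm j hjm) k (hm k hk) hjk) (hC j hjm)
              (norm_nonneg _)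
            have : (0:ℝ) < Real.exp (-α * ((k : ℝ) - (j : ℝ))) := Real.exp_pos _
            nlinarith [hED.one_le_K]
        _ = K * Real.exp (-α) ^ N * C := by
            rw [← Real.exp_nat_mul]
            congr 2
            push_cast [hj]
            ring
    have htend : Filter.Tendsto (fun N : ℕ => K * Real.exp (-α) ^ N * C)
        Filter.atTop (nhds 0) := by
      have h1 : |Real.exp (-α)| < 1 := by
        rw [abs_of_pos (Real.exp_pos _)]
        exact Real.exp_lt_one_iff.mpr (by linarith [hED.alpha_pos])
      have h2 := (tendsto_pow_atTop_nhds_zero_of_abs_lt_one h1).const_mul K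
      simpa using h2.mul_const C
    have hle : ‖P k (y k)‖ ≤ 0 := ge_of_tendsto' htend hbound
    exact norm_le_zero_iff.mp hle
  constructor
  · ext ξ
    simp only [Set.mem_setOf_eq, SetLike.mem_coe, LinearMap.mem_ker]
    constructor
    · -- ξ ∈ ker P m : build the bounded solution via Ψ
      intro hξ
      have hξ' : ξ ∈ LinearMap.ker (P m : Euc n →ₗ[ℝ] Euc n) := hξ
      refine ⟨fun k => Ψ k m ξ, ?_, ⟨K * ‖ξ‖, ?_⟩, ?_⟩
      · intro k hk
        have hkJ : k ∈ J := hm k (le_of_lt hk)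
        have hk1J : (k + 1) ∈ J := hm (k + 1) (by omega)
        obtain ⟨hker, hphi⟩ := (hΨ k hkJ m hmJ (le_of_lt hk)).2.1 ξ hξ'
        have hmem : A k (Ψ k m ξ) ∈ LinearMap.ker (P (k + 1) : Euc n →ₗ[ℝ] Euc n) :=
          (hED.bijOn k hkJ hk1J).mapsTo hker
        have hphi' : Phi A m (k + 1) (A k (Ψ k m ξ)) = ξ := by
          rw [← ContinuousLinearMap.comp_apply, ← Phi_succ_bot A hk, hphi]
        have h5 := (hΨ (k + 1) hk1J m hmJ (by omega)).1 (A k (Ψ k m ξ)) hmem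
        rw [hphi'] at h5
        show Ψ (k + 1) m ξ = A k (Ψ k m ξ)
        exact h5
      · intro k hk
        have hkJ : k ∈ J := hm k hk
        have hb := (hΨ k hkJ m hmJ hk).2.2
        have hfix : (1 - P m) ξ = ξ := by
          have hz : P m ξ = 0 := hξ
          simp [ContinuousLinearMap.sub_apply, hz]
        calc ‖Ψ k m ξ‖ = ‖(Ψ k m ∘L (1 - P m)) ξ‖ := by
              rw [ContinuousLinearMap.comp_apply, hfix]
          _ ≤ ‖Ψ k m ∘L (1 - P m)‖ * ‖ξ‖ := ContinuousLinearMap.le_opNorm _ _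
          _ ≤ (K * Real.exp (-α * ((m : ℝ) - (k : ℝ)))) * ‖ξ‖ :=
              mul_le_mul_of_nonneg_right hb (norm_nonneg _)
          _ ≤ K * ‖ξ‖ := by
              have h1 : Real.exp (-α * ((m : ℝ) - (k : ℝ))) ≤ 1 := by
                apply Real.exp_le_one_iff.mpr
                have h2 : (0:ℝ) ≤ (m : ℝ) - (k : ℝ) := by
                  have h3 : ((k : ℝ)) ≤ (m : ℝ) := Int.cast_le.mpr hk
                  linarith
                nlinarith [hED.alpha_pos]
              nlinarith [hED.one_le_K, norm_nonneg ξ,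
                mul_nonneg (by linarith [hED.one_le_K] : (0:ℝ) ≤ K) (norm_nonneg ξ)]
      · have h6 := (hΨ m hmJ m hmJ le_rfl).1 ξ hξ'
        rwa [Phi_self, ContinuousLinearMap.one_apply] at h6
    · rintro ⟨y, hy, ⟨C, hC⟩, hym⟩
      have h7 := key y hy C hC m le_rfl
      rwa [hym] at h7
  · -- uniqueness
    intro ξ hξ y z hy hyC hym hz hzC hzm k hk
    obtain ⟨Cy, hCy⟩ := hyC
    obtain ⟨Cz, hCz⟩ := hzC
    set w : ℤ → Euc n := fun k => y k - z k with hw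
    have hwsol : ∀ j : ℤ, j < m → w (j + 1) = A j (w j) := by
      intro j hj
      simp only [hw, hy j hj, hz j hj, map_sub]
    have hwb : ∀ j : ℤ, j ≤ m → ‖w j‖ ≤ Cy + Cz := by
      intro j hj
      calc ‖y j - z j‖ ≤ ‖y j‖ + ‖z j‖ := norm_sub_le _ _
        _ ≤ Cy + Cz := add_le_add (hCy j hj) (hCz j hj)
    have hwker : P k (w k) = 0 := key w hwsol (Cy + Cz) hwb k hk
    have hwm : w m = 0 := by simp [hw, hym, hzm]
    have hphikm : Phi A m k (w k) = 0 := by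
      rw [← sol_transition A m w hwsol k m hk le_rfl, hwm]
    have h8 := (hΨ k (hm k hk) m hmJ hk).1 (w k) (LinearMap.mem_ker.mpr hwker)
    rw [hphikm, map_zero] at h8
    exact sub_eq_zero.mp h8.symm
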